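/- One has 𝒢(1,1) = −(9√3)/(4π). -/

import Mathlib

open intervalIntegral Real Complex

/-- `u(t) = (−1 + i√(4t−1))/(2t)`. -/
noncomputable def uu (t : ℝ) : ℂ :=
  (-1 + Complex.I * (Real.sqrt (4 * t - 1) : ℝ)) / (2 * t)

/-- The renormalized Green's function of the triangular-lattice walk:
`𝒢(x,y) = (3/π) ∫_{1/4}^{1} (4t−1)^{−1/2} ( t^y Σ_{j=1}^{x} C(x,j)(1−t)^{j−1} Re(u(t)^j)
  − Σ_{ℓ=0}^{y−1} t^ℓ ) dt`. -/
noncomputable def calG (x y : ℕ) : ℝ :=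
  (3 / Real.pi) * ∫ t in (1/4 : ℝ)..1,
    (1 / Real.sqrt (4 * t - 1)) *
      (t ^ y * ∑ j ∈ Finset.Icc 1 x, (x.choose j : ℝ) * (1 - t) ^ (j - 1) * ((uu t) ^ j).re
        - ∑ l ∈ Finset.range y, t ^ l)

lemma uu_re (t : ℝ) : (uu t).re = -1 / (2 * t) := by
  have h2 : ((2:ℂ) * t) = ((2*t : ℝ) : ℂ) := by push_cast; ring
  rw [uu, h2, Complex.div_ofReal_re]
  simp

lemma key_integral : (∫ t in (1/4 : ℝ)..1, (4*t-1) ^ (-(1/2) : ℝ)) = Real.sqrt 3 / 2 := by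
  have h : ∀ t ∈ Set.uIcc (1/4:ℝ) 1, (fun t:ℝ => (4*t-1) ^ (-(1/2) : ℝ)) t
      = (fun u : ℝ => u ^ (-(1/2):ℝ)) (4*t + (-1)) := by
    intro t _; show (4*t-1) ^ (-(1/2):ℝ) = (4*t + -1) ^ (-(1/2):ℝ); ring_nf
  rw [intervalIntegral.integral_congr h,
    intervalIntegral.integral_comp_mul_add (fun u : ℝ => u ^ (-(1/2):ℝ)) (by norm_num) (-1)]
  norm_num
  rw [integral_rpow (by norm_num)]
  rw [show (-(1/2:ℝ))+1 = 1/2 by norm_num, ← Real.sqrt_eq_rpow]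
  rw [show ((0:ℝ)^(1/2:ℝ)) = 0 by simp]
  ring

/-- `𝒢(1,1) = −(9√3)/(4π)`. -/
theorem calG_one_one : calG 1 1 = -(9 * Real.sqrt 3) / (4 * Real.pi) := by
  rw [calG]
  have hcong : ∀ t ∈ Set.uIcc (1/4:ℝ) 1,
      (fun t : ℝ => (1 / Real.sqrt (4 * t - 1)) *
        (t ^ 1 * ∑ j ∈ Finset.Icc 1 1, ((1:ℕ).choose j : ℝ) * (1 - t) ^ (j - 1) * ((uu t) ^ j).re
          - ∑ l ∈ Finset.range 1, t ^ l)) t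
      = (fun t : ℝ => (-3/2) * (4*t-1) ^ (-(1/2) : ℝ)) t := by
    intro t ht
    rw [Set.uIcc_of_le (by norm_num)] at ht
    have ht4 : (1/4:ℝ) ≤ t := ht.1
    have ht0 : t ≠ 0 := by linarith
    have h41 : (0:ℝ) ≤ 4*t - 1 := by linarith
    simp only [Finset.Icc_self, Finset.sum_singleton, Finset.sum_range_one, pow_one, pow_zero,
      Nat.choose_self, Nat.cast_one, one_mul, mul_one, uu_re]
    rw [Real.rpow_neg h41, ← Real.sqrt_eq_rpow]
    field_simp
    ring_nf
  rw [intervalIntegral.integral_congr hcong, intervalIntegral.integral_const_mul, key_integral]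
  have hπ := Real.pi_ne_zero
  field_simp
  ring
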